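/- Let K be an odd positive integer and let γ : {0,…,K} → [0,1] satisfy: γ(l) ≥ γ(l+1) for every integer 0 ≤ l ≤ (K−1)/2, γ(l) ≤ γ(l+1) for every integer (K+1)/2 ≤ l ≤ K−1, γ((K−1)/2) > 0, and γ((K+1)/2) > 0. Then the function G : [0,1] → ℝ defined by G(p) = Σ_{l=(K+1)/2}^{K} γ(l)·C(K,l) p^l (1−p)^{K−l} − Σ_{l=0}^{(K−1)/2} γ(l)·C(K,l) p^l (1−p)^{K−l} is strictly increasing on [0,1]; in particular its derivative is strictly positive on (0,1). -/

import Mathlib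

open Finset

/-- The (rescaled) probability difference of DaRRM with noise function `γ`
outputting the majority side, when the `K` i.i.d. mechanisms succeed with
probability `p`. -/
noncomputable def Gfun (K : ℕ) (γ : ℕ → ℝ) (p : ℝ) : ℝ :=
  (∑ l ∈ Finset.Icc ((K + 1) / 2) K,
      γ l * (K.choose l : ℝ) * p ^ l * (1 - p) ^ (K - l))
  - ∑ l ∈ Finset.range ((K + 1) / 2),
      γ l * (K.choose l : ℝ) * p ^ l * (1 - p) ^ (K - l)


noncomputable def bb (K j : ℕ) (p : ℝ) : ℝ :=
  ((K-1).choose j : ℝ) * p ^ j * (1 - p) ^ (K - 1 - j)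

noncomputable def ee (K j : ℕ) (p : ℝ) : ℝ :=
  match j with
  | 0 => 0
  | Nat.succ i => bb K i p

lemma choose_id1 (n i : ℕ) :
    (n+1).choose (i+1) * (i+1) = (n+1) * n.choose i :=
  (Nat.add_one_mul_choose_eq n i).symm

lemma choose_id2 (n l : ℕ) :
    (n+1).choose l * (n+1-l) = (n+1) * n.choose l := by
  rw [← Nat.choose_succ_right_eq, Nat.add_one_mul_choose_eq]

lemma termDeriv (n : ℕ) (γ : ℕ → ℝ) (l : ℕ) (p : ℝ) :
    HasDerivAt (fun q : ℝ => γ l * (((n+1).choose l : ℕ) : ℝ) * q ^ l * (1 - q) ^ (n+1 - l))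
      (((n:ℝ)+1) * (γ l * ee (n+1) l p - γ l * bb (n+1) l p)) p := by
  have h1 : HasDerivAt (fun q : ℝ => q ^ l) ((l:ℝ) * p^(l-1)) p := hasDerivAt_pow l p
  have h2 : HasDerivAt (fun q : ℝ => (1-q) ^ (n+1-l))
      (((n+1-l : ℕ):ℝ) * (1-p)^(n+1-l-1) * (-1)) p := by
    simpa [Function.comp_def] using (hasDerivAt_pow (n+1-l) (1-p)).comp p ((hasDerivAt_id p).const_sub (1:ℝ))
  have h3 := (h1.mul h2).const_mul (γ l * (((n+1).choose l : ℕ) : ℝ))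
  have h4 : HasDerivAt (fun q : ℝ => γ l * (((n+1).choose l : ℕ) : ℝ) * q ^ l * (1 - q) ^ (n+1 - l))
      (γ l * (((n+1).choose l : ℕ) : ℝ) *
        ((l:ℝ) * p^(l-1) * (1-p)^(n+1-l) + p^l * (((n+1-l : ℕ):ℝ) * (1-p)^(n+1-l-1) * (-1)))) p := by
    simpa [mul_assoc] using h3
  convert h4 using 1
  cases l with
  | zero =>
      simp only [ee, bb]
      push_cast
      simp
      ring
  | succ i =>
      have c1 : (((n+1).choose (i+1) : ℕ) : ℝ) * ((i:ℝ)+1) = ((n:ℝ)+1) * (n.choose i : ℕ) := by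
        exact_mod_cast congrArg (Nat.cast : ℕ → ℝ) (choose_id1 n i)
      have c2 : (((n+1).choose (i+1) : ℕ) : ℝ) * (((n+1-(i+1) : ℕ)) : ℝ)
          = ((n:ℝ)+1) * ((n.choose (i+1) : ℕ) : ℝ) := by
        exact_mod_cast congrArg (Nat.cast : ℕ → ℝ) (choose_id2 n (i+1))
      simp only [ee, bb]
      have e1 : n+1-(i+1) = n-i := by omega
      have e2 : n+1-(i+1)-1 = n-(i+1) := by omega
      have e3 : n+1-1 = n := by omega
      have e4 : i+1-1 = i := by omega
      have e5 : n-i-1 = n-(i+1) := by omega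
      rw [e3, e1, e4, e5]
      rw [e1] at c2
      push_cast at c1 c2 ⊢
      linear_combination (γ (i+1) * p^(i+1) * (1-p)^(n-(i+1))) * c2
        - (γ (i+1) * p^i * (1-p)^(n-i)) * c1

lemma sumAlg (t : ℕ) (g b e : ℕ → ℝ) (he0 : e 0 = 0)
    (hes : ∀ j, e (j+1) = b j) (hbtop : b (2*t+1) = 0) :
    (∑ i ∈ range (t+1), (g (t+1+i) * e (t+1+i) - g (t+1+i) * b (t+1+i)))
    - ∑ l ∈ range (t+1), (g l * e l - g l * b l)
    = (g (t+1) + g t) * b t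
      + ∑ i ∈ range t, (g (t+2+i) - g (t+1+i)) * b (t+1+i)
      + ∑ j ∈ range t, (g j - g (j+1)) * b j := by
  rw [sum_sub_distrib, sum_sub_distrib]
  have hA : ∑ i ∈ range (t+1), g (t+1+i) * e (t+1+i)
      = (∑ i ∈ range t, g (t+2+i) * b (t+1+i)) + g (t+1) * b t := by
    have h1 : ∀ i, g (t+1+i) * e (t+1+i) = g (t+1+i) * b (t+i) := by
      intro i
      rw [show t+1+i = (t+i)+1 by omega, hes]
    rw [Finset.sum_congr rfl (fun i _ => h1 i), Finset.sum_range_succ']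
    congr 1
    · exact Finset.sum_congr rfl (fun i _ => by rw [show t+1+(i+1) = t+2+i by omega,
        show t+(i+1) = t+1+i by omega])
  have hB : ∑ i ∈ range (t+1), g (t+1+i) * b (t+1+i)
      = ∑ i ∈ range t, g (t+1+i) * b (t+1+i) := by
    rw [Finset.sum_range_succ, show t+1+t = 2*t+1 by omega, hbtop, mul_zero, add_zero]
  have hC : ∑ l ∈ range (t+1), g l * e l = ∑ i ∈ range t, g (i+1) * b i := by
    rw [Finset.sum_range_succ', he0, mul_zero, add_zero]
    exact Finset.sum_congr rfl (fun i _ => by rw [hes])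
  have hD : ∑ l ∈ range (t+1), g l * b l
      = (∑ j ∈ range t, g j * b j) + g t * b t := Finset.sum_range_succ _ _
  rw [hA, hB, hC, hD]
  have hR1 : ∑ i ∈ range t, (g (t+2+i) - g (t+1+i)) * b (t+1+i)
      = (∑ i ∈ range t, g (t+2+i) * b (t+1+i)) - ∑ i ∈ range t, g (t+1+i) * b (t+1+i) := by
    rw [← sum_sub_distrib]
    exact Finset.sum_congr rfl (fun i _ => sub_mul _ _ _)
  have hR2 : ∑ j ∈ range t, (g j - g (j+1)) * b j
      = (∑ j ∈ range t, g j * b j) - ∑ j ∈ range t, g (j+1) * b j := by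
    rw [← sum_sub_distrib]
    exact Finset.sum_congr rfl (fun j _ => sub_mul _ _ _)
  rw [hR1, hR2]
  ring

lemma keyDeriv (t : ℕ) (γ : ℕ → ℝ) (p : ℝ) :
    HasDerivAt (Gfun (2*t+1) γ)
      (((2*t+1 : ℕ):ℝ) * ((γ (t+1) + γ t) * bb (2*t+1) t p
        + (∑ i ∈ range t, (γ (t+2+i) - γ (t+1+i)) * bb (2*t+1) (t+1+i) p)
        + ∑ j ∈ range t, (γ j - γ (j+1)) * bb (2*t+1) j p)) p := by
  have hhalf : (2*t+1+1)/2 = t+1 := by omega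
  have hfun : Gfun (2*t+1) γ = fun q =>
      (∑ l ∈ Finset.Icc (t+1) (2*t+1),
        γ l * ((2*t+1).choose l : ℝ) * q ^ l * (1 - q) ^ (2*t+1 - l))
      - ∑ l ∈ Finset.range (t+1),
        γ l * ((2*t+1).choose l : ℝ) * q ^ l * (1 - q) ^ (2*t+1 - l) := by
    funext q; unfold Gfun; rw [hhalf]
  rw [hfun]
  have h1 : HasDerivAt (fun q : ℝ =>
      (∑ l ∈ Finset.Icc (t+1) (2*t+1),
        γ l * ((2*t+1).choose l : ℝ) * q ^ l * (1 - q) ^ (2*t+1 - l))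
      - ∑ l ∈ Finset.range (t+1),
        γ l * ((2*t+1).choose l : ℝ) * q ^ l * (1 - q) ^ (2*t+1 - l))
      ((∑ l ∈ Finset.Icc (t+1) (2*t+1),
          (((2*t : ℕ):ℝ)+1) * (γ l * ee (2*t+1) l p - γ l * bb (2*t+1) l p))
       - ∑ l ∈ Finset.range (t+1),
          (((2*t : ℕ):ℝ)+1) * (γ l * ee (2*t+1) l p - γ l * bb (2*t+1) l p)) p :=
    HasDerivAt.sub
      (HasDerivAt.fun_sum (fun l _ => termDeriv (2*t) γ l p))
      (HasDerivAt.fun_sum (fun l _ => termDeriv (2*t) γ l p))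
  convert h1 using 1
  have hIcc : ∑ l ∈ Finset.Icc (t+1) (2*t+1),
      (((2*t : ℕ):ℝ)+1) * (γ l * ee (2*t+1) l p - γ l * bb (2*t+1) l p)
      = ∑ i ∈ Finset.range (t+1),
      (((2*t : ℕ):ℝ)+1) * (γ (t+1+i) * ee (2*t+1) (t+1+i) p - γ (t+1+i) * bb (2*t+1) (t+1+i) p) := by
    rw [← Finset.Ico_add_one_right_eq_Icc, Finset.sum_Ico_eq_sum_range,
      show 2*t+1+1-(t+1) = t+1 by omega]
  rw [hIcc, ← Finset.mul_sum, ← Finset.mul_sum, ← mul_sub]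
  rw [sumAlg t γ (fun j => bb (2*t+1) j p) (fun j => ee (2*t+1) j p) rfl (fun j => rfl)
    (by simp [bb, Nat.choose_eq_zero_of_lt (show 2*t+1-1 < 2*t+1 by omega)])]
  push_cast
  ring

/-- under the monotonicity assumption on `γ` with strictly positive
middle values, `G` is strictly increasing on `[0,1]` and its derivative is
strictly positive on `(0,1)`. -/
theorem statement9 (K : ℕ) (hK : Odd K) (hKpos : 0 < K)
    (γ : ℕ → ℝ) (hγ01 : ∀ l ≤ K, 0 ≤ γ l ∧ γ l ≤ 1)
    (hmono1 : ∀ l ≤ (K - 1) / 2, γ (l + 1) ≤ γ l)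
    (hmono2 : ∀ l, (K + 1) / 2 ≤ l → l ≤ K - 1 → γ l ≤ γ (l + 1))
    (hpos1 : 0 < γ ((K - 1) / 2)) (hpos2 : 0 < γ ((K + 1) / 2)) :
    StrictMonoOn (Gfun K γ) (Set.Icc 0 1) ∧
    ∀ p ∈ Set.Ioo (0 : ℝ) 1, 0 < deriv (Gfun K γ) p := by
  obtain ⟨t, ht⟩ := hK
  have hKeq : K = 2*t+1 := by omega
  subst hKeq
  rw [show (2*t+1-1)/2 = t by omega] at hmono1 hpos1
  rw [show (2*t+1+1)/2 = t+1 by omega] at hmono2 hpos2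
  have hdpos : ∀ p ∈ Set.Ioo (0:ℝ) 1, 0 < deriv (Gfun (2*t+1) γ) p := by
    intro p hp
    rw [(keyDeriv t γ p).deriv]
    have hb : ∀ j, j ≤ 2*t → 0 < bb (2*t+1) j p := by
      intro j hj
      have hc := Nat.choose_pos hj
      have h1 : (0:ℝ) < p := hp.1
      have h2 : (0:ℝ) < 1 - p := by linarith [hp.2]
      unfold bb
      rw [show 2*t+1-1 = 2*t by omega]
      exact mul_pos (mul_pos (by exact_mod_cast hc) (pow_pos h1 j)) (pow_pos h2 _)
    apply mul_pos (by exact_mod_cast (by omega : 0 < 2*t+1))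
    apply add_pos_of_pos_of_nonneg
    · apply add_pos_of_pos_of_nonneg
      · exact mul_pos (by have := (hγ01 (t+1) (by omega)).1; linarith) (hb t (by omega))
      · apply Finset.sum_nonneg; intro i hi
        have hi' : i < t := Finset.mem_range.mp hi
        have hm := hmono2 (t+1+i) (by omega) (by omega)
        rw [show t+1+i+1 = t+2+i by omega] at hm
        exact mul_nonneg (by linarith) (hb (t+1+i) (by omega)).le
    · apply Finset.sum_nonneg; intro j hj
      have hj' : j < t := Finset.mem_range.mp hj
      have hm := hmono1 j (by omega)
      exact mul_nonneg (by linarith) (hb j (by omega)).le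
  exact ⟨strictMonoOn_of_deriv_pos (convex_Icc 0 1)
      (fun x _ => (keyDeriv t γ x).continuousAt.continuousWithinAt)
      (by rwa [interior_Icc]), hdpos⟩
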